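/- Let D be a unital C*-algebra and γ a *-automorphism of D. Let M_γ = {a ∈ C([0,1], D) : a(1) = γ(a(0))} and C_per = {a ∈ C([0,1], D) : a(0) = a(1)} (a copy of C(S¹, D)). Then the following are equivalent: (1) there exists a *-algebra isomorphism φ : C_per → M_γ such that φ(f·a) = f·φ(a) for every f ∈ C([0,1], ℂ) with f(0) = f(1) and every a ∈ C_per, where (f·a)(t) = f(t) a(t); (2) γ is homotopic to id_D in Aut(D), i.e., there exists a family (ψ_t)_{t ∈ [0,1]} of *-automorphisms of D with ψ₀ = id_D, ψ₁ = γ, and such that for every d ∈ D the map t ↦ ψ_t(d) from [0,1] to D is norm-continuous. -/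

import Mathlib

/-- The unit interval `[0,1] ⊆ ℝ`. -/
def I01 : Set ℝ := Set.Icc 0 1

lemma zero_mem_I01 : (0 : ℝ) ∈ I01 := by norm_num [I01]

lemma one_mem_I01 : (1 : ℝ) ∈ I01 := by norm_num [I01]

/-- The mapping torus `M_γ = {a ∈ C([0,1], D) : a(1) = γ(a(0))}`, as a subset of
`C([0,1], D)`. -/
def mappingTorusSet {D : Type*} [CStarAlgebra D] (γ : D ≃⋆ₐ[ℂ] D) : Set C(I01, D) :=
  {a | a ⟨1, one_mem_I01⟩ = γ (a ⟨0, zero_mem_I01⟩)}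

/-- `C_per = {a ∈ C([0,1], D) : a(0) = a(1)}`, a copy of `C(S¹, D)`. -/
def periodicSet (D : Type*) [CStarAlgebra D] : Set C(I01, D) :=
  {a | a ⟨0, zero_mem_I01⟩ = a ⟨1, one_mem_I01⟩}

namespace MappingTorusAux

variable {D : Type*} [CStarAlgebra D]

/-- Pointwise `‖·‖^{1/2}` of a continuous map, as a `ℂ`-valued continuous map. -/
noncomputable def nPart (a : C(I01, D)) : C(I01, ℂ) :=
  ⟨fun t => (Real.sqrt ‖a t‖ : ℂ),
    Complex.continuous_ofReal.comp (Real.continuous_sqrt.comp a.continuous.norm)⟩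

lemma nPart_apply (a : C(I01, D)) (t : I01) : nPart a t = (Real.sqrt ‖a t‖ : ℂ) := rfl

lemma norm_inv_smul_le (x : D) :
    ‖((Real.sqrt ‖x‖ : ℝ) : ℂ)⁻¹ • x‖ ≤ Real.sqrt ‖x‖ := by
  rcases eq_or_ne x 0 with rfl | hx
  · simp
  · have h0 : (0 : ℝ) < ‖x‖ := norm_pos_iff.mpr hx
    have hs : (0 : ℝ) < Real.sqrt ‖x‖ := Real.sqrt_pos.mpr h0
    rw [norm_smul, norm_inv]
    have hnr : ‖((Real.sqrt ‖x‖ : ℝ) : ℂ)‖ = Real.sqrt ‖x‖ := by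
      rw [Complex.norm_real, Real.norm_eq_abs, abs_of_nonneg (Real.sqrt_nonneg _)]
    rw [hnr]
    calc (Real.sqrt ‖x‖)⁻¹ * ‖x‖
        = (Real.sqrt ‖x‖)⁻¹ * (Real.sqrt ‖x‖ * Real.sqrt ‖x‖) := by
          rw [Real.mul_self_sqrt h0.le]
      _ = Real.sqrt ‖x‖ := by rw [inv_mul_cancel_left₀ hs.ne']
      _ ≤ Real.sqrt ‖x‖ := le_refl _

/-- Pointwise "phase" part: `uPart a (t) = (‖a t‖^{1/2})⁻¹ • a t`. -/
noncomputable def uPart (a : C(I01, D)) : C(I01, D) :=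
  ⟨fun t => ((Real.sqrt ‖a t‖ : ℝ) : ℂ)⁻¹ • a t, by
    refine continuous_iff_continuousAt.mpr fun t₀ => ?_
    by_cases h : a t₀ = 0
    · have hval : ((Real.sqrt ‖a t₀‖ : ℝ) : ℂ)⁻¹ • a t₀ = 0 := by simp [h]
      unfold ContinuousAt
      have hbeta : (fun t : I01 => ((Real.sqrt ‖a t‖ : ℝ) : ℂ)⁻¹ • a t) t₀ = 0 := hval
      rw [hbeta]
      refine squeeze_zero_norm (fun t => norm_inv_smul_le (a t)) ?_
      have hc : Continuous fun t : I01 => Real.sqrt ‖a t‖ :=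
        Real.continuous_sqrt.comp a.continuous.norm
      have h2 : Filter.Tendsto (fun t : I01 => Real.sqrt ‖a t‖) (nhds t₀)
          (nhds (Real.sqrt ‖a t₀‖)) := hc.continuousAt
      rwa [show Real.sqrt ‖a t₀‖ = 0 by simp [h]] at h2
    · have hne : ((Real.sqrt ‖a t₀‖ : ℝ) : ℂ) ≠ 0 := by
        simp only [ne_eq, Complex.ofReal_eq_zero]
        exact Real.sqrt_ne_zero'.mpr (norm_pos_iff.mpr h)
      have hc : ContinuousAt (fun t : I01 => ((Real.sqrt ‖a t‖ : ℝ) : ℂ)⁻¹) t₀ :=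
        ((Complex.continuous_ofReal.comp
          (Real.continuous_sqrt.comp a.continuous.norm)).continuousAt).inv₀ hne
      exact hc.smul a.continuous.continuousAt⟩

lemma uPart_apply (a : C(I01, D)) (t : I01) :
    uPart a t = ((Real.sqrt ‖a t‖ : ℝ) : ℂ)⁻¹ • a t := rfl

lemma nPart_smul_uPart (a : C(I01, D)) : nPart a • uPart a = a := by
  ext t
  rw [ContinuousMap.smul_apply', nPart_apply, uPart_apply]
  by_cases h : a t = 0
  · simp [h]
  · have hne : ((Real.sqrt ‖a t‖ : ℝ) : ℂ) ≠ 0 := by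
      simp only [ne_eq, Complex.ofReal_eq_zero]
      exact Real.sqrt_ne_zero'.mpr (norm_pos_iff.mpr h)
    rw [smul_smul, mul_inv_cancel₀ hne, one_smul]

/-- A section of the mapping torus passing through `d` at time `t`. -/
noncomputable def sect (γ : D ≃⋆ₐ[ℂ] D) (t : I01) (d : D) : C(I01, D) :=
  ⟨fun s => ((1 - |s.1 - t.1| : ℝ) : ℂ) • d + ((max 0 (s.1 - t.1) : ℝ) : ℂ) • γ d
      + ((max 0 (t.1 - s.1) : ℝ) : ℂ) • γ.symm d, by
    have h1 : Continuous fun s : I01 => (s.1 : ℝ) := continuous_subtype_val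
    fun_prop⟩

lemma sect_apply (γ : D ≃⋆ₐ[ℂ] D) (t : I01) (d : D) (s : I01) :
    sect γ t d s = ((1 - |s.1 - t.1| : ℝ) : ℂ) • d + ((max 0 (s.1 - t.1) : ℝ) : ℂ) • γ d
      + ((max 0 (t.1 - s.1) : ℝ) : ℂ) • γ.symm d := rfl

lemma sect_apply_self (γ : D ≃⋆ₐ[ℂ] D) (t : I01) (d : D) : sect γ t d t = d := by
  rw [sect_apply]
  simp

lemma sect_mem (γ : D ≃⋆ₐ[ℂ] D) (t : I01) (d : D) : sect γ t d ∈ mappingTorusSet γ := by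
  have ht0 : (0 : ℝ) ≤ t.1 := t.2.1
  have ht1 : t.1 ≤ 1 := t.2.2
  show sect γ t d ⟨1, one_mem_I01⟩ = γ (sect γ t d ⟨0, zero_mem_I01⟩)
  rw [sect_apply, sect_apply]
  have e1 : |(1 : ℝ) - t.1| = 1 - t.1 := abs_of_nonneg (by linarith)
  have e2 : max (0 : ℝ) (1 - t.1) = 1 - t.1 := max_eq_right (by linarith)
  have e3 : max (0 : ℝ) (t.1 - 1) = 0 := max_eq_left (by linarith)
  have e4 : |(0 : ℝ) - t.1| = t.1 := by
    rw [abs_sub_comm, sub_zero, abs_of_nonneg ht0]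
  have e5 : max (0 : ℝ) (0 - t.1) = 0 := max_eq_left (by linarith)
  have e6 : max (0 : ℝ) (t.1 - 0) = t.1 := by rw [sub_zero]; exact max_eq_right ht0
  rw [show ((⟨1, one_mem_I01⟩ : I01) : ℝ) = 1 from rfl,
    show ((⟨0, zero_mem_I01⟩ : I01) : ℝ) = 0 from rfl, e1, e2, e3, e4, e5, e6]
  rw [map_add, map_add, map_smul, map_smul, map_smul, StarAlgEquiv.apply_symm_apply]
  simp only [Complex.ofReal_zero, zero_smul, add_zero, zero_add]
  have e7 : ((1 - (1 - t.1) : ℝ) : ℂ) = ((t.1 : ℝ) : ℂ) := by push_cast; ring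
  rw [e7]
  abel

end MappingTorusAux

open MappingTorusAux in
/-- Pointwise evaluation of a pointwise-continuous family of automorphisms along a continuous
map is continuous. -/
lemma mappingTorus_cont_eval {D : Type*} [CStarAlgebra D] (Ψ : I01 → (D ≃⋆ₐ[ℂ] D))
    (h : ∀ d : D, Continuous fun t => Ψ t d) (a : C(I01, D)) :
    Continuous fun t => Ψ t (a t) := by
  have hiso : ∀ (t : I01) (x : D), ‖Ψ t x‖ = ‖x‖ := fun t x =>
    NonUnitalStarAlgHom.norm_map (Ψ t) (EquivLike.injective (Ψ t)) x
  refine continuous_iff_continuousAt.mpr fun t₀ => ?_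
  rw [ContinuousAt, ← tendsto_sub_nhds_zero_iff]
  have hb : ∀ t : I01, ‖Ψ t (a t) - Ψ t₀ (a t₀)‖ ≤
      ‖a t - a t₀‖ + ‖Ψ t (a t₀) - Ψ t₀ (a t₀)‖ := by
    intro t
    calc ‖Ψ t (a t) - Ψ t₀ (a t₀)‖
        ≤ ‖Ψ t (a t) - Ψ t (a t₀)‖ + ‖Ψ t (a t₀) - Ψ t₀ (a t₀)‖ := by
          simpa [dist_eq_norm] using dist_triangle (Ψ t (a t)) (Ψ t (a t₀)) (Ψ t₀ (a t₀))
      _ = ‖a t - a t₀‖ + ‖Ψ t (a t₀) - Ψ t₀ (a t₀)‖ := by rw [← map_sub, hiso]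
  refine squeeze_zero_norm hb ?_
  have hg : Continuous fun t => ‖a t - a t₀‖ + ‖Ψ t (a t₀) - Ψ t₀ (a t₀)‖ :=
    ((a.continuous.sub continuous_const).norm).add
      (((h (a t₀)).sub continuous_const).norm)
  have h2 : Filter.Tendsto (fun t => ‖a t - a t₀‖ + ‖Ψ t (a t₀) - Ψ t₀ (a t₀)‖)
      (nhds t₀) (nhds (‖a t₀ - a t₀‖ + ‖Ψ t₀ (a t₀) - Ψ t₀ (a t₀)‖)) := hg.continuousAt
  rwa [show ‖a t₀ - a t₀‖ + ‖Ψ t₀ (a t₀) - Ψ t₀ (a t₀)‖ = 0 by simp] at h2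

lemma mappingTorus_cont_symm {D : Type*} [CStarAlgebra D] (Ψ : I01 → (D ≃⋆ₐ[ℂ] D))
    (h : ∀ d : D, Continuous fun t => Ψ t d) (d : D) :
    Continuous fun t => (Ψ t).symm d := by
  have hiso : ∀ (t : I01) (x : D), ‖Ψ t x‖ = ‖x‖ := fun t x =>
    NonUnitalStarAlgHom.norm_map (Ψ t) (EquivLike.injective (Ψ t)) x
  refine continuous_iff_continuousAt.mpr fun t₀ => ?_
  rw [ContinuousAt, ← tendsto_sub_nhds_zero_iff]
  have hb : ∀ t : I01, ‖(Ψ t).symm d - (Ψ t₀).symm d‖ ≤ ‖d - Ψ t ((Ψ t₀).symm d)‖ := by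
    intro t
    refine le_of_eq ?_
    rw [← hiso t, map_sub, StarAlgEquiv.apply_symm_apply]
  refine squeeze_zero_norm hb ?_
  have hg : Continuous fun t => ‖d - Ψ t ((Ψ t₀).symm d)‖ :=
    (continuous_const.sub (h _)).norm
  have h2 : Filter.Tendsto (fun t => ‖d - Ψ t ((Ψ t₀).symm d)‖) (nhds t₀)
      (nhds (‖d - Ψ t₀ ((Ψ t₀).symm d)‖)) := hg.continuousAt
  rwa [show ‖d - Ψ t₀ ((Ψ t₀).symm d)‖ = 0 by
    simp [StarAlgEquiv.apply_symm_apply]] at h2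

open MappingTorusAux in
/-- Let `D` be a unital C*-algebra and `γ` a *-automorphism of `D`.  The
mapping torus `M_γ` is trivial as a `C(S¹)`-algebra, i.e. there is a `C(S¹)`-linear *-algebra
isomorphism `C(S¹, D) → M_γ`, if and only if `γ` is homotopic to `id` in `Aut(D)`. -/
theorem mappingTorus_trivial_iff_homotopic_to_id
    {D : Type*} [CStarAlgebra D] (γ : D ≃⋆ₐ[ℂ] D) :
    (∃ φ : C(I01, D) → C(I01, D),
      Set.BijOn φ (periodicSet D) (mappingTorusSet γ) ∧
      (∀ a ∈ periodicSet D, ∀ b ∈ periodicSet D,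
        φ (a + b) = φ a + φ b ∧ φ (a * b) = φ a * φ b) ∧
      (∀ a ∈ periodicSet D, φ (star a) = star (φ a)) ∧
      (∀ (c : ℂ), ∀ a ∈ periodicSet D, φ (c • a) = c • φ a) ∧
      (∀ f : C(I01, ℂ), f ⟨0, zero_mem_I01⟩ = f ⟨1, one_mem_I01⟩ →
        ∀ a ∈ periodicSet D, φ (f • a) = f • φ a)) ↔
    (∃ ψ : I01 → (D ≃⋆ₐ[ℂ] D),
      ψ ⟨0, zero_mem_I01⟩ = StarAlgEquiv.refl ℂ D ∧ ψ ⟨1, one_mem_I01⟩ = γ ∧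
      ∀ d : D, Continuous fun t : I01 => ψ t d) := by
  have t0 : I01 := ⟨0, zero_mem_I01⟩
  constructor
  · rintro ⟨φ, hbij, hops, hstarh, hsmulC, hsmulf⟩
    classical
    have hne : Nonempty C(I01, D) := ⟨0⟩
    set P := periodicSet D with hPdef
    set M := mappingTorusSet γ with hMdef
    set ρ := Function.invFunOn φ P with hρdef
    have hinv : Set.InvOn ρ φ P M := hbij.invOn_invFunOn
    have hρmem : ∀ b ∈ M, ρ b ∈ P := fun b hb => hbij.surjOn.mapsTo_invFunOn hb
    have hφρ : ∀ b ∈ M, φ (ρ b) = b := fun b hb => hinv.2 hb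
    have hρφ : ∀ a ∈ P, ρ (φ a) = a := fun a ha => hinv.1 ha
    -- closure properties
    have hsubP : ∀ a ∈ P, ∀ b ∈ P, a - b ∈ P := by
      intro a ha b hb
      show (a - b) ⟨0, zero_mem_I01⟩ = (a - b) ⟨1, one_mem_I01⟩
      have ha' : a ⟨0, zero_mem_I01⟩ = a ⟨1, one_mem_I01⟩ := ha
      have hb' : b ⟨0, zero_mem_I01⟩ = b ⟨1, one_mem_I01⟩ := hb
      rw [ContinuousMap.sub_apply, ContinuousMap.sub_apply, ha', hb']
    have hφsub : ∀ a ∈ P, ∀ b ∈ P, φ (a - b) = φ a - φ b := by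
      intro a ha b hb
      have h := (hops (a - b) (hsubP a ha b hb) b hb).1
      rw [sub_add_cancel] at h
      exact eq_sub_of_add_eq h.symm
    have hsmulP : ∀ f : C(I01, ℂ), f ⟨0, zero_mem_I01⟩ = f ⟨1, one_mem_I01⟩ →
        ∀ a ∈ P, f • a ∈ P := by
      intro f hf a ha
      show (f • a) ⟨0, zero_mem_I01⟩ = (f • a) ⟨1, one_mem_I01⟩
      have ha' : a ⟨0, zero_mem_I01⟩ = a ⟨1, one_mem_I01⟩ := ha
      rw [ContinuousMap.smul_apply', ContinuousMap.smul_apply', hf, ha']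
    -- the fiberwise vanishing lemma for φ
    have key0 : ∀ a ∈ P, ∀ t : I01, a t = 0 → φ a t = 0 := by
      intro a ha t hat
      have ha' : a ⟨0, zero_mem_I01⟩ = a ⟨1, one_mem_I01⟩ := ha
      have hfp : nPart a ⟨0, zero_mem_I01⟩ = nPart a ⟨1, one_mem_I01⟩ := by
        rw [nPart_apply, nPart_apply, ha']
      have hbp : uPart a ∈ P := by
        show uPart a ⟨0, zero_mem_I01⟩ = uPart a ⟨1, one_mem_I01⟩
        rw [uPart_apply, uPart_apply, ha']
      have h := hsmulf (nPart a) hfp (uPart a) hbp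
      rw [nPart_smul_uPart] at h
      rw [h, ContinuousMap.smul_apply', show nPart a t = 0 by
        rw [nPart_apply, hat]; simp]
      simp
    have keyEq : ∀ a ∈ P, ∀ b ∈ P, ∀ t : I01, a t = b t → φ a t = φ b t := by
      intro a ha b hb t h
      have h0 : (a - b) t = 0 := by rw [ContinuousMap.sub_apply, h, sub_self]
      have h1 := key0 (a - b) (hsubP a ha b hb) t h0
      rw [hφsub a ha b hb, ContinuousMap.sub_apply] at h1
      exact sub_eq_zero.mp h1
    -- same lemmas for ρ
    have hγnorm : ∀ x : D, ‖γ x‖ = ‖x‖ := fun x =>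
      NonUnitalStarAlgHom.norm_map γ (EquivLike.injective γ) x
    have hsubM : ∀ b ∈ M, ∀ b' ∈ M, b - b' ∈ M := by
      intro b hb b' hb'
      have hb1 : b ⟨1, one_mem_I01⟩ = γ (b ⟨0, zero_mem_I01⟩) := hb
      have hb1' : b' ⟨1, one_mem_I01⟩ = γ (b' ⟨0, zero_mem_I01⟩) := hb'
      show (b - b') ⟨1, one_mem_I01⟩ = γ ((b - b') ⟨0, zero_mem_I01⟩)
      rw [ContinuousMap.sub_apply, ContinuousMap.sub_apply, hb1, hb1', map_sub]
    have key0' : ∀ b ∈ M, ∀ t : I01, b t = 0 → ρ b t = 0 := by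
      intro b hb t hbt
      have hb1 : b ⟨1, one_mem_I01⟩ = γ (b ⟨0, zero_mem_I01⟩) := hb
      have hfp : nPart b ⟨0, zero_mem_I01⟩ = nPart b ⟨1, one_mem_I01⟩ := by
        rw [nPart_apply, nPart_apply, hb1, hγnorm]
      have hcM : uPart b ∈ M := by
        show uPart b ⟨1, one_mem_I01⟩ = γ (uPart b ⟨0, zero_mem_I01⟩)
        rw [uPart_apply, uPart_apply, hb1, hγnorm, map_smul]
      have hrc : ρ (uPart b) ∈ P := hρmem _ hcM
      have hsm : nPart b • ρ (uPart b) ∈ P := hsmulP _ hfp _ hrc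
      have h1 : φ (nPart b • ρ (uPart b)) = b := by
        rw [hsmulf _ hfp _ hrc, hφρ _ hcM, nPart_smul_uPart]
      have h2 : ρ b = nPart b • ρ (uPart b) := by
        conv_lhs => rw [← h1]
        exact hρφ _ hsm
      rw [h2, ContinuousMap.smul_apply', show nPart b t = 0 by
        rw [nPart_apply, hbt]; simp]
      simp
    have keyEq' : ∀ b ∈ M, ∀ b' ∈ M, ∀ t : I01, b t = b' t → ρ b t = ρ b' t := by
      intro b hb b' hb' t h
      have hρsub : ρ b - ρ b' ∈ P := hsubP _ (hρmem _ hb) _ (hρmem _ hb')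
      have hφdiff : φ (ρ b - ρ b') = b - b' := by
        rw [hφsub _ (hρmem _ hb) _ (hρmem _ hb'), hφρ _ hb, hφρ _ hb']
      have hmm : b - b' ∈ M := hsubM _ hb _ hb'
      have hρdiff : ρ (b - b') = ρ b - ρ b' := by
        rw [← hφdiff, hρφ _ hρsub]
      have h1 := key0' _ hmm t (by rw [ContinuousMap.sub_apply, h, sub_self])
      rw [hρdiff, ContinuousMap.sub_apply] at h1
      exact sub_eq_zero.mp h1
    -- constant maps
    have hconstP : ∀ d : D, (ContinuousMap.const I01 d) ∈ P := fun d => rfl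
    have hφconstM : ∀ d : D, φ (ContinuousMap.const I01 d) ∈ M := fun d =>
      hbij.mapsTo (hconstP d)
    -- the family of automorphisms
    have hEleft : ∀ (t : I01) (d : D),
        ρ (sect γ t (φ (ContinuousMap.const I01 d) t)) t = d := by
      intro t d
      have h1 := keyEq' _ (sect_mem γ t (φ (ContinuousMap.const I01 d) t)) _
        (hφconstM d) t (sect_apply_self γ t _)
      rw [h1, hρφ _ (hconstP d)]
      rfl
    have hEright : ∀ (t : I01) (d : D),
        φ (ContinuousMap.const I01 (ρ (sect γ t d) t)) t = d := by
      intro t d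
      have h1 : sect γ t d ∈ M := sect_mem γ t d
      have h2 : ρ (sect γ t d) ∈ P := hρmem _ h1
      have h3 : (ContinuousMap.const I01 (ρ (sect γ t d) t)) t = ρ (sect γ t d) t := rfl
      rw [keyEq _ (hconstP _) _ h2 t h3, hφρ _ h1, sect_apply_self]
    set E : I01 → (D ≃⋆ₐ[ℂ] D) := fun t =>
      { toFun := fun d => φ (ContinuousMap.const I01 d) t
        invFun := fun d => ρ (sect γ t d) t
        left_inv := fun d => hEleft t d
        right_inv := fun d => hEright t d
        map_mul' := fun d e => by
          show φ (ContinuousMap.const I01 (d * e)) t = _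
          rw [show (ContinuousMap.const I01 (d * e)) =
            ContinuousMap.const I01 d * ContinuousMap.const I01 e from rfl,
            (hops _ (hconstP d) _ (hconstP e)).2]
          rfl
        map_add' := fun d e => by
          show φ (ContinuousMap.const I01 (d + e)) t = _
          rw [show (ContinuousMap.const I01 (d + e)) =
            ContinuousMap.const I01 d + ContinuousMap.const I01 e from rfl,
            (hops _ (hconstP d) _ (hconstP e)).1]
          rfl
        map_smul' := fun c d => by
          show φ (ContinuousMap.const I01 (c • d)) t = _
          rw [show (ContinuousMap.const I01 (c • d)) =
            c • ContinuousMap.const I01 d from rfl, hsmulC c _ (hconstP d)]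
          rfl
        map_star' := fun d => by
          show φ (ContinuousMap.const I01 (star d)) t = _
          rw [show (ContinuousMap.const I01 (star d)) =
            star (ContinuousMap.const I01 d) from rfl, hstarh _ (hconstP d)]
          rfl } with hEdef
    refine ⟨fun t => (E ⟨0, zero_mem_I01⟩).symm.trans (E t), ?_, ?_, ?_⟩
    · refine StarAlgEquiv.ext fun d => ?_
      show E ⟨0, zero_mem_I01⟩ ((E ⟨0, zero_mem_I01⟩).symm d) = d
      exact (E ⟨0, zero_mem_I01⟩).apply_symm_apply d
    · refine StarAlgEquiv.ext fun d => ?_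
      show E ⟨1, one_mem_I01⟩ ((E ⟨0, zero_mem_I01⟩).symm d) = γ d
      set e := (E ⟨0, zero_mem_I01⟩).symm d with hedef
      have h1 : E ⟨1, one_mem_I01⟩ e = γ (E ⟨0, zero_mem_I01⟩ e) := hφconstM e
      rw [h1, (E ⟨0, zero_mem_I01⟩).apply_symm_apply]
    · intro d
      show Continuous fun t : I01 =>
        φ (ContinuousMap.const I01 ((E ⟨0, zero_mem_I01⟩).symm d)) t
      exact (φ _).continuous
  · rintro ⟨ψ, h0, h1, hcont⟩
    refine ⟨fun a => ⟨fun t => ψ t (a t), mappingTorus_cont_eval ψ hcont a⟩,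
      ⟨?_, ?_, ?_⟩, ?_, ?_, ?_, ?_⟩
    · -- maps to
      intro a ha
      have ha' : a ⟨0, zero_mem_I01⟩ = a ⟨1, one_mem_I01⟩ := ha
      show ψ ⟨1, one_mem_I01⟩ (a ⟨1, one_mem_I01⟩) =
        γ (ψ ⟨0, zero_mem_I01⟩ (a ⟨0, zero_mem_I01⟩))
      rw [h0, h1, ha']
      rfl
    · -- injective
      intro a _ b _ h
      ext t
      exact (ψ t).injective (ContinuousMap.congr_fun h t)
    · -- surjective
      intro b hb
      have hb1 : b ⟨1, one_mem_I01⟩ = γ (b ⟨0, zero_mem_I01⟩) := hb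
      refine ⟨⟨fun t => (ψ t).symm (b t),
        mappingTorus_cont_eval (fun t => (ψ t).symm)
          (mappingTorus_cont_symm ψ hcont) b⟩, ?_, ?_⟩
      · show (ψ ⟨0, zero_mem_I01⟩).symm (b ⟨0, zero_mem_I01⟩) =
          (ψ ⟨1, one_mem_I01⟩).symm (b ⟨1, one_mem_I01⟩)
        rw [h0, h1, hb1, StarAlgEquiv.symm_apply_apply]
        rfl
      · ext t
        exact (ψ t).apply_symm_apply (b t)
    · intro a _ b _
      constructor
      · ext t
        show ψ t ((a + b) t) = ψ t (a t) + ψ t (b t)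
        rw [ContinuousMap.add_apply, map_add]
      · ext t
        show ψ t ((a * b) t) = ψ t (a t) * ψ t (b t)
        rw [ContinuousMap.mul_apply, map_mul]
    · intro a _
      ext t
      show ψ t ((star a) t) = star (ψ t (a t))
      rw [ContinuousMap.star_apply, map_star]
    · intro c a _
      ext t
      show ψ t ((c • a) t) = c • ψ t (a t)
      rw [ContinuousMap.smul_apply, map_smul]
    · intro f _ a _
      ext t
      show ψ t ((f • a) t) = (f • (⟨fun s => ψ s (a s), _⟩ : C(I01, D))) t
      rw [ContinuousMap.smul_apply', ContinuousMap.smul_apply', map_smul]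
      rfl
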